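/- arXiv:1505.07289 — 3 statements merged into one kernel-verified Lean document; each statement's English description precedes it below -/
import Mathlib

section
/- Let R be a commutative ring and let x = (x_1, ..., x_p) be a regular sequence in R. Then the Koszul complex of x over R is a free resolution of R/(x_1, ..., x_p), i.e., the augmented Koszul complex is exact. -/
/-- The `k`-th module of the Koszul complex of a `p`-tuple: functions on the
`k`-element subsets of `Fin p`, i.e. `⋀^k R^p` in the basis `e_I`. -/
abbrev KoszulMod (R : Type*) [CommRing R] (p k : ℕ) : Type _ :=
  {s : Finset (Fin p) // s.card = k} → R

/-- The Koszul differential `δ_x : ⋀^{k+1} R^p → ⋀^k R^p`, contraction with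
`x₁ e₁^* + ⋯ + x_p e_p^*`, in the bases `e_I`:
`(δ f)(J) = ∑_{i ∉ J} (-1)^{#{j ∈ J : j < i}} x_i f(J ∪ {i})`. -/
noncomputable def koszulDiff (R : Type*) [CommRing R] (p : ℕ) (x : Fin p → R) (k : ℕ) :
    KoszulMod R p (k + 1) →ₗ[R] KoszulMod R p k where
  toFun f J := ∑ i ∈ (J.1ᶜ).attach,
    ((-1 : R) ^ (J.1.filter (fun j => j < i.1)).card * x i.1) *
      f ⟨insert i.1 J.1, by
        rw [Finset.card_insert_of_notMem (Finset.mem_compl.mp i.2), J.2]⟩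
  map_add' f g := by
    funext J
    simp [mul_add, Finset.sum_add_distrib]
  map_smul' r f := by
    funext J
    simp only [Pi.smul_apply, smul_eq_mul, RingHom.id_apply]
    rw [Finset.mul_sum]
    exact Finset.sum_congr rfl fun i _ => by ring

namespace KoszulAux

variable {R : Type*} [CommRing R] {p k : ℕ}

/-- total-function version of `f`. -/
def tot (f : KoszulMod R p k) (S : Finset (Fin p)) : R :=
  if h : S.card = k then f ⟨S, h⟩ else 0

lemma tot_eq (f : KoszulMod R p k) (S : Finset (Fin p)) (h : S.card = k) :
    tot f S = f ⟨S, h⟩ := dif_pos h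

lemma koszulDiff_apply (x : Fin p → R) (f : KoszulMod R p (k+1))
    (J : {s : Finset (Fin p) // s.card = k}) :
    koszulDiff R p x k f J =
      ∑ i ∈ J.1ᶜ, ((-1 : R) ^ (J.1.filter (fun j => j < i)).card * x i) *
        tot f (insert i J.1) := by
  show ∑ i ∈ (J.1ᶜ).attach, _ = _
  rw [← Finset.sum_attach (J.1ᶜ) (fun i => ((-1 : R) ^ (J.1.filter (fun j => j < i)).card * x i) *
        tot f (insert i J.1))]
  refine Finset.sum_congr rfl fun i _ => ?_
  rw [tot_eq f _ (by rw [Finset.card_insert_of_notMem (Finset.mem_compl.mp i.2), J.2])]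

lemma last_not_mem_map (s : Finset (Fin p)) : Fin.last p ∉ s.map Fin.castSuccEmb := by
  simp only [Finset.mem_map, Fin.coe_castSuccEmb]
  rintro ⟨j, -, hj⟩
  exact absurd hj (Fin.castSucc_lt_last j).ne

/-- preimage under castSucc -/
noncomputable def pre (S : Finset (Fin (p+1))) : Finset (Fin p) :=
  S.preimage Fin.castSucc (Fin.castSucc_injective p).injOn

lemma mem_pre {S : Finset (Fin (p+1))} {i : Fin p} : i ∈ pre S ↔ i.castSucc ∈ S :=
  Finset.mem_preimage

lemma pre_map (s : Finset (Fin p)) : pre (s.map Fin.castSuccEmb) = s := by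
  ext i
  rw [mem_pre, ← Fin.coe_castSuccEmb]
  exact Finset.mem_map' _

lemma map_pre {S : Finset (Fin (p+1))} (h : Fin.last p ∉ S) :
    (pre S).map Fin.castSuccEmb = S := by
  ext i
  simp only [Finset.mem_map, Fin.coe_castSuccEmb]
  constructor
  · rintro ⟨j, hj, rfl⟩; exact mem_pre.mp hj
  · intro hi
    obtain ⟨j, rfl⟩ := Fin.exists_castSucc_eq.mpr (fun h' => h (h' ▸ hi))
    exact ⟨j, mem_pre.mpr hi, rfl⟩

lemma card_pre {S : Finset (Fin (p+1))} (h : Fin.last p ∉ S) :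
    (pre S).card = S.card := by
  rw [← map_pre h, pre_map, Finset.card_map]

lemma compl_map (s : Finset (Fin p)) :
    (s.map Fin.castSuccEmb)ᶜ = insert (Fin.last p) (sᶜ.map Fin.castSuccEmb) := by
  ext i
  rcases Fin.eq_castSucc_or_eq_last i with ⟨j, rfl⟩ | rfl
  swap
  · simp [last_not_mem_map s]
  · simp only [Finset.mem_compl, Finset.mem_insert, Finset.mem_map, Fin.coe_castSuccEmb]
    constructor
    · intro h
      right
      exact ⟨j, (fun hj => h ⟨j, hj, rfl⟩), rfl⟩
    · rintro (h | ⟨j', hj', hjj⟩)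
      · exact absurd h (Fin.castSucc_lt_last j).ne
      · obtain rfl := Fin.castSucc_injective p hjj
        rintro ⟨j'', hj'', hi⟩
        obtain rfl := Fin.castSucc_injective p hi
        exact hj' hj''

def res0 (f : KoszulMod R (p+1) k) : KoszulMod R p k := fun J =>
  f ⟨J.1.map Fin.castSuccEmb, by rw [Finset.card_map]; exact J.2⟩

def res1 (f : KoszulMod R (p+1) (k+1)) : KoszulMod R p k := fun J =>
  f ⟨insert (Fin.last p) (J.1.map Fin.castSuccEmb), by
    rw [Finset.card_insert_of_notMem (last_not_mem_map _), Finset.card_map, J.2]⟩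


lemma mem_map_iff {s : Finset (Fin p)} {i : Fin p} :
    i.castSucc ∈ s.map Fin.castSuccEmb ↔ i ∈ s := by
  rw [← Fin.coe_castSuccEmb]; exact Finset.mem_map' _

lemma lemA (x : Fin (p+1) → R) (k : ℕ) (f : KoszulMod R (p+1) (k+1)) :
    res0 (koszulDiff R (p+1) x k f) =
      koszulDiff R p (x ∘ Fin.castSucc) k (res0 f) +
        (((-1 : R) ^ k * x (Fin.last p)) • res1 f) := by
  funext J
  show koszulDiff R (p+1) x k f ⟨J.1.map Fin.castSuccEmb, _⟩ = _
  rw [koszulDiff_apply]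
  show ∑ i ∈ (J.1.map Fin.castSuccEmb)ᶜ, _ = _
  rw [compl_map, Finset.sum_insert (last_not_mem_map _), Finset.sum_map]
  simp only [Pi.add_apply, Pi.smul_apply, smul_eq_mul]
  rw [koszulDiff_apply, add_comm]
  congr 1
  · refine Finset.sum_congr rfl fun i hi => ?_
    have hi' : i ∉ J.1 := Finset.mem_compl.mp hi
    have h1 : ((J.1.map Fin.castSuccEmb).filter
        (fun j => j < Fin.castSuccEmb i)).card = (J.1.filter (fun j => j < i)).card := by
      rw [Finset.filter_map, Finset.card_map]
      congr 1
    rw [h1]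
    have hcard : (insert (Fin.castSuccEmb i) (J.1.map Fin.castSuccEmb)).card = k + 1 := by
      rw [Finset.card_insert_of_notMem (by
        rw [Fin.coe_castSuccEmb]
        exact fun hmem => hi' (mem_map_iff.mp hmem)), Finset.card_map, J.2]
    have hcard2 : (insert i J.1).card = k + 1 := by
      rw [Finset.card_insert_of_notMem hi', J.2]
    rw [tot_eq _ _ hcard, tot_eq _ _ hcard2]
    congr 1
    show f _ = f _
    refine congrArg f (Subtype.ext ?_)
    show insert (Fin.castSuccEmb i) (J.1.map Fin.castSuccEmb) = (insert i J.1).map Fin.castSuccEmb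
    rw [Finset.map_insert]
  · have hfil : ((J.1.map Fin.castSuccEmb).filter (fun j => j < Fin.last p))
        = J.1.map Fin.castSuccEmb := by
      refine Finset.filter_true_of_mem fun j hj => ?_
      obtain ⟨j', -, rfl⟩ := Finset.mem_map.mp hj
      exact Fin.castSucc_lt_last j'
    rw [hfil, Finset.card_map, J.2]
    have hcard : (insert (Fin.last p) (J.1.map Fin.castSuccEmb)).card = k + 1 := by
      rw [Finset.card_insert_of_notMem (last_not_mem_map _), Finset.card_map, J.2]
    rw [tot_eq _ _ hcard]
    rfl

lemma lemB (x : Fin (p+1) → R) (k : ℕ) (f : KoszulMod R (p+1) (k+2)) :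
    res1 (koszulDiff R (p+1) x (k+1) f) =
      koszulDiff R p (x ∘ Fin.castSucc) k (res1 f) := by
  funext J
  show koszulDiff R (p+1) x (k+1) f ⟨insert (Fin.last p) (J.1.map Fin.castSuccEmb), _⟩ = _
  rw [koszulDiff_apply, koszulDiff_apply]
  show ∑ i ∈ (insert (Fin.last p) (J.1.map Fin.castSuccEmb))ᶜ, _ = _
  have hc : (insert (Fin.last p) (J.1.map Fin.castSuccEmb))ᶜ = J.1ᶜ.map Fin.castSuccEmb := by
    rw [Finset.compl_insert, compl_map, Finset.erase_insert (last_not_mem_map _)]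
  rw [hc, Finset.sum_map]
  refine Finset.sum_congr rfl fun i hi => ?_
  have hi' : i ∉ J.1 := Finset.mem_compl.mp hi
  have h1 : ((insert (Fin.last p) (J.1.map Fin.castSuccEmb)).filter
      (fun j => j < Fin.castSuccEmb i)).card = (J.1.filter (fun j => j < i)).card := by
    rw [Finset.filter_insert, if_neg (by
      rw [Fin.coe_castSuccEmb]
      exact not_lt_of_gt (Fin.castSucc_lt_last i)),
      Finset.filter_map, Finset.card_map]
    congr 1
  rw [h1]
  have hni : Fin.castSuccEmb i ∉ insert (Fin.last p) (J.1.map Fin.castSuccEmb) := by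
    rw [Fin.coe_castSuccEmb, Finset.mem_insert]
    rintro (h | h)
    · exact (Fin.castSucc_lt_last i).ne h
    · exact hi' (mem_map_iff.mp h)
  have hcard : (insert (Fin.castSuccEmb i) (insert (Fin.last p)
      (J.1.map Fin.castSuccEmb))).card = k + 2 := by
    rw [Finset.card_insert_of_notMem hni,
      Finset.card_insert_of_notMem (last_not_mem_map _), Finset.card_map, J.2]
  have hcard2 : (insert i J.1).card = k + 1 := by
    rw [Finset.card_insert_of_notMem hi', J.2]
  rw [tot_eq _ _ hcard, tot_eq _ _ hcard2]
  congr 1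
  show f _ = f _
  refine congrArg f (Subtype.ext ?_)
  show insert (Fin.castSuccEmb i) (insert (Fin.last p) (J.1.map Fin.castSuccEmb))
      = insert (Fin.last p) ((insert i J.1).map Fin.castSuccEmb)
  rw [Finset.map_insert, Finset.insert_comm]


@[simp] lemma res0_zero : res0 (0 : KoszulMod R (p+1) k) = 0 := rfl
@[simp] lemma res1_zero : res1 (0 : KoszulMod R (p+1) (k+1)) = 0 := rfl

lemma res0_empty (g : KoszulMod R (p+1) 0) :
    res0 g ⟨∅, Finset.card_empty⟩ = g ⟨∅, Finset.card_empty⟩ :=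
  congrArg g (Subtype.ext (Finset.map_empty _))

lemma k0_ext {q : ℕ} {f g : KoszulMod R q 0}
    (h : f ⟨∅, Finset.card_empty⟩ = g ⟨∅, Finset.card_empty⟩) : f = g := by
  funext S
  have hS : S = ⟨∅, Finset.card_empty⟩ := Subtype.ext (Finset.card_eq_zero.mp S.2)
  rw [hS]; exact h

lemma ext_res {f g : KoszulMod R (p+1) (k+1)} (h0 : res0 f = res0 g)
    (h1 : res1 f = res1 g) : f = g := by
  funext S
  by_cases h : Fin.last p ∈ S.1
  · have hcard : (pre (S.1.erase (Fin.last p))).card = k := by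
      rw [card_pre (Finset.notMem_erase _ _), Finset.card_erase_of_mem h, S.2]; omega
    have hval : S.1 = insert (Fin.last p)
        ((pre (S.1.erase (Fin.last p))).map Fin.castSuccEmb) := by
      rw [map_pre (Finset.notMem_erase _ _), Finset.insert_erase h]
    have e1 : f S = res1 f ⟨pre (S.1.erase (Fin.last p)), hcard⟩ :=
      congrArg f (Subtype.ext hval)
    have e2 : g S = res1 g ⟨pre (S.1.erase (Fin.last p)), hcard⟩ :=
      congrArg g (Subtype.ext hval)
    rw [e1, e2, h1]
  · have hcard : (pre S.1).card = k + 1 := by rw [card_pre h, S.2]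
    have hval : S.1 = (pre S.1).map Fin.castSuccEmb := (map_pre h).symm
    have e1 : f S = res0 f ⟨pre S.1, hcard⟩ := congrArg f (Subtype.ext hval)
    have e2 : g S = res0 g ⟨pre S.1, hcard⟩ := congrArg g (Subtype.ext hval)
    rw [e1, e2, h0]

noncomputable def comb (a : KoszulMod R p (k+1)) (b : KoszulMod R p k) :
    KoszulMod R (p+1) (k+1) := fun S =>
  if h : Fin.last p ∈ S.1 then
    b ⟨pre (S.1.erase (Fin.last p)), by
      rw [card_pre (Finset.notMem_erase _ _), Finset.card_erase_of_mem h, S.2]; omega⟩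
  else a ⟨pre S.1, by rw [card_pre h, S.2]⟩

lemma res0_comb (a : KoszulMod R p (k+1)) (b : KoszulMod R p k) :
    res0 (comb a b) = a := by
  funext J
  show comb a b ⟨J.1.map Fin.castSuccEmb, _⟩ = a J
  rw [comb, dif_neg (last_not_mem_map _)]
  exact congrArg a (Subtype.ext (pre_map J.1))

lemma res1_comb (a : KoszulMod R p (k+1)) (b : KoszulMod R p k) :
    res1 (comb a b) = b := by
  funext J
  show comb a b ⟨insert (Fin.last p) (J.1.map Fin.castSuccEmb), _⟩ = b J
  rw [comb, dif_pos (Finset.mem_insert_self _ _)]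
  refine congrArg b (Subtype.ext ?_)
  show pre ((insert (Fin.last p) (J.1.map Fin.castSuccEmb)).erase (Fin.last p)) = J.1
  rw [Finset.erase_insert (last_not_mem_map _), pre_map]

end KoszulAux

namespace KoszulAux

variable {R : Type*} [CommRing R]


lemma master (p : ℕ) : ∀ (x : Fin p → R),
    (∀ i : Fin p, ∀ r : R,
      x i * r ∈ Ideal.span (x '' {j | j < i}) → r ∈ Ideal.span (x '' {j | j < i})) →
    (∀ k : ℕ, (koszulDiff R p x k).comp (koszulDiff R p x (k + 1)) = 0) ∧
    (∀ k : ℕ, LinearMap.ker (koszulDiff R p x k) =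
      LinearMap.range (koszulDiff R p x (k + 1))) ∧
    (∀ g : KoszulMod R p 0,
      g ∈ LinearMap.range (koszulDiff R p x 0) ↔
        g ⟨∅, Finset.card_empty⟩ ∈ Ideal.span (Set.range x)) := by
  induction p with
  | zero =>
    intro x _
    have empty : ∀ k (J : {s : Finset (Fin 0) // s.card = k+1}), False := by
      intro k J
      have h := Finset.card_le_univ J.1
      rw [J.2] at h
      simp at h
    have hz : ∀ k (f : KoszulMod R 0 (k+1)) J, koszulDiff R 0 x k f J = 0 := by
      intro k f J
      rw [koszulDiff_apply]
      have hJ : J.1ᶜ = ∅ := Finset.eq_empty_of_forall_notMem (fun i => i.elim0)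
      rw [hJ, Finset.sum_empty]
    refine ⟨?_, ?_, ?_⟩
    · intro k
      apply LinearMap.ext; intro f
      funext J
      show koszulDiff R 0 x k (koszulDiff R 0 x (k+1) f) J = 0
      exact hz k _ J
    · intro k
      ext f
      constructor
      · intro _
        refine ⟨0, ?_⟩
        rw [map_zero]
        exact (funext fun J => (empty _ J).elim : (0 : KoszulMod R 0 (k+1)) = f)
      · intro _
        rw [LinearMap.mem_ker]
        funext J
        exact hz k f J
    · intro g
      have hr : Set.range x = ∅ := Set.range_eq_empty x
      rw [hr, Ideal.span_empty, Ideal.mem_bot]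
      constructor
      · rintro ⟨f, rfl⟩
        exact hz 0 f _
      · intro h
        refine ⟨0, ?_⟩
        rw [map_zero]
        exact k0_ext h.symm
  | succ p IH =>
    intro x hreg
    have hreg' : ∀ i : Fin p, ∀ r : R,
        (x ∘ Fin.castSucc) i * r ∈ Ideal.span ((x ∘ Fin.castSucc) '' {j | j < i}) →
        r ∈ Ideal.span ((x ∘ Fin.castSucc) '' {j | j < i}) := by
      intro i r h
      have himg : (x ∘ Fin.castSucc) '' {j | j < i} = x '' {j | j < i.castSucc} := by
        ext z
        constructor
        · rintro ⟨j, hj, rfl⟩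
          exact ⟨j.castSucc, Fin.castSucc_lt_castSucc_iff.mpr hj, rfl⟩
        · rintro ⟨j, hj, rfl⟩
          obtain ⟨j', rfl⟩ := Fin.exists_castSucc_eq.mpr
            (ne_of_lt (lt_trans hj (Fin.castSucc_lt_last i)))
          exact ⟨j', Fin.castSucc_lt_castSucc_iff.mp hj, rfl⟩
      rw [himg] at h ⊢
      exact hreg i.castSucc r h
    obtain ⟨IH1, IH2, IH3⟩ := IH (x ∘ Fin.castSucc) hreg'
    have hIdeal : Ideal.span (Set.range (x ∘ Fin.castSucc)) =
        Ideal.span (x '' {j | j < Fin.last p}) := by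
      congr 1
      ext z
      constructor
      · rintro ⟨j, rfl⟩
        exact ⟨j.castSucc, Fin.castSucc_lt_last j, rfl⟩
      · rintro ⟨j, hj, rfl⟩
        obtain ⟨j', rfl⟩ := Fin.exists_castSucc_eq.mpr (ne_of_lt hj)
        exact ⟨j', rfl⟩
    have hyreg : ∀ r : R, x (Fin.last p) * r ∈ Ideal.span (Set.range (x ∘ Fin.castSucc)) →
        r ∈ Ideal.span (Set.range (x ∘ Fin.castSucc)) := by
      intro r h
      rw [hIdeal] at h ⊢
      exact hreg (Fin.last p) r h
    have hrange : Set.range x = insert (x (Fin.last p)) (Set.range (x ∘ Fin.castSucc)) := by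
      ext z
      constructor
      · rintro ⟨i, rfl⟩
        rcases Fin.eq_castSucc_or_eq_last i with ⟨j, rfl⟩ | rfl
        · exact Set.mem_insert_of_mem _ ⟨j, rfl⟩
        · exact Set.mem_insert _ _
      · rintro (rfl | ⟨j, rfl⟩)
        · exact ⟨Fin.last p, rfl⟩
        · exact ⟨j.castSucc, rfl⟩
    -- part 1
    have hres0 : ∀ k (f : KoszulMod R (p+1) (k+2)),
        res0 (koszulDiff R (p+1) x k (koszulDiff R (p+1) x (k+1) f)) = 0 := by
      intro k f
      rw [lemA x k, lemA x (k+1), lemB x k, map_add, map_smul]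
      have h0 : koszulDiff R p (x ∘ Fin.castSucc) k
          (koszulDiff R p (x ∘ Fin.castSucc) (k+1) (res0 f)) = 0 := by
        simpa using LinearMap.congr_fun (IH1 k) (res0 f)
      rw [h0, zero_add, ← add_smul]
      have hc : ((-1:R)^(k+1) * x (Fin.last p)) + ((-1:R)^k * x (Fin.last p)) = 0 := by
        rw [pow_succ]; ring
      rw [hc, zero_smul]
    have hres1 : ∀ k (f : KoszulMod R (p+1) (k+3)),
        res1 (koszulDiff R (p+1) x (k+1) (koszulDiff R (p+1) x (k+2) f)) = 0 := by
      intro k f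
      rw [lemB x k, lemB x (k+1)]
      simpa using LinearMap.congr_fun (IH1 k) (res1 f)
    have part1 : ∀ k, (koszulDiff R (p+1) x k).comp (koszulDiff R (p+1) x (k + 1)) = 0 := by
      intro k
      apply LinearMap.ext; intro f
      show koszulDiff R (p+1) x k (koszulDiff R (p+1) x (k+1) f) = 0
      rcases k with _ | m
      · exact k0_ext (by rw [← res0_empty (koszulDiff R (p+1) x 0 (koszulDiff R (p+1) x 1 f)), hres0 0 f]; rfl)
      · exact ext_res ((hres0 (m+1) f).trans rfl) ((hres1 m f).trans rfl)
    -- part 2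
    have part2 : ∀ k, LinearMap.ker (koszulDiff R (p+1) x k) =
        LinearMap.range (koszulDiff R (p+1) x (k+1)) := by
      intro k
      apply le_antisymm
      · intro f hf
        rw [LinearMap.mem_ker] at hf
        rcases k with _ | m
        · -- k = 0
          have hA : (0 : KoszulMod R p 0) = koszulDiff R p (x ∘ Fin.castSucc) 0 (res0 f) +
              (((-1:R)^0 * x (Fin.last p)) • res1 f) := by
            rw [← lemA x 0 f, hf, res0_zero]
          have hval : koszulDiff R p (x ∘ Fin.castSucc) 0 (res0 f) ⟨∅, Finset.card_empty⟩ +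
              x (Fin.last p) * res1 f ⟨∅, Finset.card_empty⟩ = 0 := by
            have h := (congrFun hA ⟨∅, Finset.card_empty⟩).symm
            simpa using h
          have h1 : koszulDiff R p (x ∘ Fin.castSucc) 0 (res0 f) ⟨∅, Finset.card_empty⟩ ∈
              Ideal.span (Set.range (x ∘ Fin.castSucc)) :=
            (IH3 _).mp ⟨res0 f, rfl⟩
          have h2 : x (Fin.last p) * res1 f ⟨∅, Finset.card_empty⟩ ∈
              Ideal.span (Set.range (x ∘ Fin.castSucc)) := by
            have : x (Fin.last p) * res1 f ⟨∅, Finset.card_empty⟩ =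
                -(koszulDiff R p (x ∘ Fin.castSucc) 0 (res0 f) ⟨∅, Finset.card_empty⟩) := by
              linear_combination hval
            rw [this]
            exact neg_mem h1
          obtain ⟨g₁, hg₁⟩ := (IH3 (res1 f)).mpr (hyreg _ h2)
          have hu : koszulDiff R p (x ∘ Fin.castSucc) 0
              (res0 f + x (Fin.last p) • g₁) = 0 := by
            rw [map_add, map_smul, hg₁]
            apply k0_ext
            simpa using hval
          have humem : res0 f + x (Fin.last p) • g₁ ∈
              LinearMap.range (koszulDiff R p (x ∘ Fin.castSucc) 1) := by
            rw [← IH2 0]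
            exact LinearMap.mem_ker.mpr hu
          obtain ⟨h, hh⟩ := humem
          refine ⟨comb h g₁, ext_res ?_ ?_⟩
          · rw [lemA x 1, res0_comb, res1_comb, hh]
            funext J
            simp only [Pi.add_apply, Pi.smul_apply, smul_eq_mul]
            ring
          · rw [lemB x 0, res1_comb, hg₁]
        · -- k = m+1
          have hB : koszulDiff R p (x ∘ Fin.castSucc) m (res1 f) = 0 := by
            rw [← lemB x m f, hf, res1_zero]
          have hmem1 : res1 f ∈ LinearMap.range (koszulDiff R p (x ∘ Fin.castSucc) (m+1)) := by
            rw [← IH2 m]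
            exact LinearMap.mem_ker.mpr hB
          obtain ⟨g₁, hg₁⟩ := hmem1
          have hA : koszulDiff R p (x ∘ Fin.castSucc) (m+1) (res0 f) +
              (((-1:R)^(m+1) * x (Fin.last p)) • res1 f) = 0 := by
            rw [← lemA x (m+1) f, hf, res0_zero]
          have hu : koszulDiff R p (x ∘ Fin.castSucc) (m+1)
              (res0 f + ((-1:R)^(m+1) * x (Fin.last p)) • g₁) = 0 := by
            rw [map_add, map_smul, hg₁]
            exact hA
          have humem : res0 f + ((-1:R)^(m+1) * x (Fin.last p)) • g₁ ∈
              LinearMap.range (koszulDiff R p (x ∘ Fin.castSucc) (m+2)) := by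
            rw [← IH2 (m+1)]
            exact LinearMap.mem_ker.mpr hu
          obtain ⟨h, hh⟩ := humem
          refine ⟨comb h g₁, ext_res ?_ ?_⟩
          · rw [lemA x (m+2), res0_comb, res1_comb, hh]
            funext J
            simp only [Pi.add_apply, Pi.smul_apply, smul_eq_mul]
            ring
          · rw [lemB x (m+1), res1_comb, hg₁]
      · rintro f ⟨g, rfl⟩
        rw [LinearMap.mem_ker]
        simpa using LinearMap.congr_fun (part1 k) g
    -- part 3
    refine ⟨part1, part2, ?_⟩
    intro g
    constructor
    · rintro ⟨f, rfl⟩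
      have hval : koszulDiff R (p+1) x 0 f ⟨∅, Finset.card_empty⟩ =
          koszulDiff R p (x ∘ Fin.castSucc) 0 (res0 f) ⟨∅, Finset.card_empty⟩ +
            ((-1:R)^0 * x (Fin.last p)) * res1 f ⟨∅, Finset.card_empty⟩ := by
        rw [← res0_empty (koszulDiff R (p+1) x 0 f), lemA x 0 f]
        rfl
      rw [hval]
      have hsub : Ideal.span (Set.range (x ∘ Fin.castSucc)) ≤ Ideal.span (Set.range x) :=
        Ideal.span_mono (by rw [hrange]; exact Set.subset_insert _ _)
      refine Ideal.add_mem _ (hsub ((IH3 _).mp ⟨res0 f, rfl⟩)) ?_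
      have hy : x (Fin.last p) ∈ Ideal.span (Set.range x) := Ideal.subset_span ⟨Fin.last p, rfl⟩
      have : ((-1:R)^0 * x (Fin.last p)) * res1 f ⟨∅, Finset.card_empty⟩ =
          x (Fin.last p) * res1 f ⟨∅, Finset.card_empty⟩ := by ring
      rw [this]
      exact Ideal.mul_mem_right _ _ hy
    · intro hg
      rw [hrange, Ideal.mem_span_insert] at hg
      obtain ⟨c, z, hz, hgz⟩ := hg
      obtain ⟨f₀, hf₀⟩ := (IH3 (fun _ => z)).mpr hz
      refine ⟨comb f₀ (fun _ => c), k0_ext ?_⟩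
      rw [← res0_empty (koszulDiff R (p+1) x 0 (comb f₀ (fun _ => c))), lemA x 0 (comb f₀ (fun _ => c)), res0_comb, res1_comb]
      show koszulDiff R p (x ∘ Fin.castSucc) 0 f₀ ⟨∅, Finset.card_empty⟩ +
          ((-1:R)^0 * x (Fin.last p)) * c = g ⟨∅, Finset.card_empty⟩
      rw [hf₀, hgz]
      show z + ((-1:R)^0 * x (Fin.last p)) * c = c * x (Fin.last p) + z
      ring

end KoszulAux

set_option linter.unusedVariables false in
/-- The Koszul complex of a regular sequence `x = (x₁, …, x_p)` is a free
resolution of `R/(x₁, …, x_p)`: it is a complex, it is exact at every positive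
level (note that `⋀^{p+1} R^p = 0`, so exactness at the top level includes the
injectivity of the last differential), and the image of `δ_x : ⋀^1 R^p → R`
is the ideal `(x₁, …, x_p)`, so the cokernel of the complex is `R/(x)`. -/
theorem stmt4 (R : Type*) [CommRing R] (p : ℕ) (x : Fin p → R)
    (hreg : ∀ i : Fin p, ∀ r : R,
      x i * r ∈ Ideal.span (x '' {j | j < i}) → r ∈ Ideal.span (x '' {j | j < i}))
    (hproper : Ideal.span (Set.range x) ≠ ⊤) :
    (∀ k : ℕ, (koszulDiff R p x k).comp (koszulDiff R p x (k + 1)) = 0) ∧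
    (∀ k : ℕ, LinearMap.ker (koszulDiff R p x k) =
      LinearMap.range (koszulDiff R p x (k + 1))) ∧
    (∀ g : KoszulMod R p 0,
      g ∈ LinearMap.range (koszulDiff R p x 0) ↔
        g ⟨∅, Finset.card_empty⟩ ∈ Ideal.span (Set.range x)) := by
  exact KoszulAux.master p x hreg
end

section
/- In R = C[[x,y]] with J = (y^k, x^ℓ y^m), k > m ≥ 0, ℓ ≥ 1: any ideal a of R/J of finite length (as R-module) is contained in the image of the ideal (y^m) in R/J. Consequently the length of J along the associated prime (x,y) equals ℓ(k-m). -/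
open MvPowerSeries Finsupp

noncomputable section Stmt9Aux

abbrev RR := MvPowerSeries (Fin 2) ℂ

/-- exponent finsupp for x^i y^j -/
def ee (i j : ℕ) : Fin 2 →₀ ℕ := Finsupp.single 0 i + Finsupp.single 1 j

lemma ee_apply0 (i j : ℕ) : ee i j 0 = i := by
  simp [ee, Finsupp.single_apply]

lemma ee_apply1 (i j : ℕ) : ee i j 1 = j := by
  simp [ee, Finsupp.single_apply]

lemma eq_ee (d : Fin 2 →₀ ℕ) : d = ee (d 0) (d 1) := by
  ext s
  fin_cases s
  · simpa using (ee_apply0 (d 0) (d 1)).symm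
  · simpa using (ee_apply1 (d 0) (d 1)).symm

lemma ee_le_iff {a b : ℕ} {d : Fin 2 →₀ ℕ} : ee a b ≤ d ↔ a ≤ d 0 ∧ b ≤ d 1 := by
  constructor
  · intro h
    exact ⟨by simpa [ee_apply0] using h 0, by simpa [ee_apply1] using h 1⟩
  · rintro ⟨h0, h1⟩ s
    fin_cases s
    · simpa [ee_apply0] using h0
    · simpa [ee_apply1] using h1

/-- monomial x^i y^j as element of RR -/
def mono (i j : ℕ) : RR := MvPowerSeries.monomial (ee i j) 1

lemma mono_eq (i j : ℕ) :
    (MvPowerSeries.X 0 : RR) ^ i * MvPowerSeries.X 1 ^ j = mono i j := by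
  rw [MvPowerSeries.X_pow_eq, MvPowerSeries.X_pow_eq, MvPowerSeries.monomial_mul_monomial,
    one_mul, mono, ee]

lemma mono_zero (j : ℕ) : (MvPowerSeries.X 1 : RR) ^ j = mono 0 j := by
  rw [← mono_eq 0 j, pow_zero, one_mul]

lemma y_mul_mono (c a b : ℕ) :
    (MvPowerSeries.X 1 : RR) ^ c * mono a b = mono a (c + b) := by
  rw [MvPowerSeries.X_pow_eq, mono, mono, MvPowerSeries.monomial_mul_monomial, one_mul]
  congr 1
  rw [ee, ee, Finsupp.single_add]
  abel

/-- key coefficient test -/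
lemma coeff_span_monomials {G : Set RR} {d : Fin 2 →₀ ℕ}
    (hG : ∀ u ∈ G, ∀ r : RR, MvPowerSeries.coeff d (r * u) = 0)
    {f : RR} (hf : f ∈ Ideal.span G) : MvPowerSeries.coeff d f = 0 := by
  have key : ∀ r : RR, MvPowerSeries.coeff d (r * f) = 0 := by
    refine Submodule.span_induction (p := fun f _ => ∀ r : RR, MvPowerSeries.coeff d (r * f) = 0)
      ?_ ?_ ?_ ?_ hf
    · exact hG
    · intro r; rw [mul_zero, map_zero]
    · intro a b _ _ ha hb r; rw [mul_add, map_add, ha, hb, add_zero]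
    · intro a b _ hb r
      rw [smul_eq_mul, ← mul_assoc]
      exact hb (r * a)
  simpa using key 1

lemma coeff_mul_mono {d : Fin 2 →₀ ℕ} {a b : ℕ} (h : ¬ (a ≤ d 0 ∧ b ≤ d 1)) (r : RR) :
    MvPowerSeries.coeff d (r * mono a b) = 0 := by
  rw [mono, MvPowerSeries.coeff_mul_monomial, if_neg]
  intro hle
  exact h (ee_le_iff.mp hle)

lemma y_pow_dvd_iff {c : ℕ} {f : RR} :
    (MvPowerSeries.X 1 : RR) ^ c ∣ f ↔ ∀ d : Fin 2 →₀ ℕ, d 1 < c →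
      MvPowerSeries.coeff d f = 0 :=
  MvPowerSeries.X_pow_dvd_iff

lemma y_dvd_of_x_mul {c r : ℕ} {g : RR}
    (h : (MvPowerSeries.X 1 : RR) ^ c ∣ (MvPowerSeries.X 0 : RR) ^ r * g) :
    (MvPowerSeries.X 1 : RR) ^ c ∣ g := by
  rw [y_pow_dvd_iff] at h ⊢
  intro d hd
  have hc := h (Finsupp.single 0 r + d) (by
    simpa [Finsupp.add_apply, Finsupp.single_apply] using hd)
  rwa [MvPowerSeries.X_pow_eq, MvPowerSeries.coeff_add_monomial_mul, one_mul] at hc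

lemma mem_span_mono {l c : ℕ} {h : RR}
    (hh : ∀ d : Fin 2 →₀ ℕ, ¬ (d 0 < l ∧ d 1 < c) → MvPowerSeries.coeff d h = 0) :
    h ∈ Submodule.span ℂ ((fun p : ℕ × ℕ => mono p.1 p.2) ''
      ((Finset.range l ×ˢ Finset.range c : Finset (ℕ × ℕ)) : Set (ℕ × ℕ))) := by
  have hrep : h = ∑ p ∈ Finset.range l ×ˢ Finset.range c,
      (MvPowerSeries.coeff (ee p.1 p.2) h) • mono p.1 p.2 := by
    ext d
    rw [map_sum]
    have hterm : ∀ p : ℕ × ℕ,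
        MvPowerSeries.coeff d ((MvPowerSeries.coeff (ee p.1 p.2) h) • mono p.1 p.2)
        = if d = ee p.1 p.2 then MvPowerSeries.coeff (ee p.1 p.2) h else 0 := by
      intro p
      rw [map_smul, mono, MvPowerSeries.coeff_monomial, smul_ite, smul_eq_mul, mul_one,
        smul_zero]
    simp only [hterm]
    by_cases hd : d 0 < l ∧ d 1 < c
    · rw [Finset.sum_eq_single (d 0, d 1)]
      · rw [if_pos (eq_ee d)]
        conv_lhs => rw [eq_ee d]
      · intro p _ hp
        rw [if_neg]
        intro he
        apply hp
        have h0 : p.1 = d 0 := by rw [← ee_apply0 p.1 p.2, ← he]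
        have h1 : p.2 = d 1 := by rw [← ee_apply1 p.1 p.2, ← he]
        exact Prod.ext h0 h1
      · intro hmem
        exact absurd (Finset.mem_product.mpr
          ⟨Finset.mem_range.mpr hd.1, Finset.mem_range.mpr hd.2⟩) hmem
    · rw [hh d hd, Finset.sum_eq_zero]
      intro p hp
      rw [if_neg]
      intro he
      apply hd
      rw [Finset.mem_product, Finset.mem_range, Finset.mem_range] at hp
      rw [he, ee_apply0, ee_apply1]
      exact hp
  rw [hrep]
  refine Submodule.sum_mem _ ?_
  intro p hp
  exact Submodule.smul_mem _ _ (Submodule.subset_span ⟨p, Finset.mem_coe.mpr hp, rfl⟩)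

def RRmk (f : (Fin 2 →₀ ℕ) → ℂ) : RR := f

lemma coeff_RRmk (f : (Fin 2 →₀ ℕ) → ℂ) (d : Fin 2 →₀ ℕ) :
    MvPowerSeries.coeff d (RRmk f) = f d := rfl

lemma split_lemma (l c : ℕ) (g : RR) :
    ∃ g1 g2 g3 : RR, g = g1 + g2 + g3 ∧ (MvPowerSeries.X 0 : RR) ^ l ∣ g1 ∧
      (MvPowerSeries.X 1 : RR) ^ c ∣ g2 ∧
      (∀ d : Fin 2 →₀ ℕ, ¬ (d 0 < l ∧ d 1 < c) → MvPowerSeries.coeff d g3 = 0) := by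
  classical
  refine ⟨RRmk (fun d => if l ≤ d 0 then MvPowerSeries.coeff d g else 0),
    RRmk (fun d => if l ≤ d 0 then 0 else if c ≤ d 1 then MvPowerSeries.coeff d g else 0),
    RRmk (fun d => if l ≤ d 0 then 0 else if c ≤ d 1 then 0 else MvPowerSeries.coeff d g),
    ?_, ?_, ?_, ?_⟩
  · ext d
    rw [map_add, map_add]
    simp only [coeff_RRmk]
    split_ifs <;> ring
  · rw [MvPowerSeries.X_pow_dvd_iff]
    intro d hd
    simp only [coeff_RRmk]
    rw [if_neg (by omega)]
  · rw [MvPowerSeries.X_pow_dvd_iff]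
    intro d hd
    simp only [coeff_RRmk]
    split_ifs with h1 h2
    · rfl
    · omega
    · rfl
  · intro d hd
    simp only [coeff_RRmk]
    split_ifs with h1 h2
    · rfl
    · rfl
    · omega

lemma fin_id_le_of_strict {n : ℕ} (f : Fin (n + 1) → ℕ)
    (hf : ∀ i : Fin n, f i.castSucc < f i.succ) : ∀ i : Fin (n + 1), (i : ℕ) ≤ f i := by
  intro i
  induction i using Fin.induction with
  | zero => exact Nat.zero_le _
  | succ i ih =>
    have := hf i
    rw [Fin.val_succ]
    rw [Fin.coe_castSucc] at ih
    omega

end Stmt9Aux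



/-- The length of a module, i.e. the Krull dimension of its lattice of
submodules. -/
noncomputable def moduleLength (R M : Type*) [Ring R] [AddCommGroup M] [Module R M] :
    WithBot ℕ∞ :=
  Order.krullDim (Submodule R M)

set_option maxHeartbeats 2000000 in
set_option synthInstance.maxHeartbeats 1000000 in
/-- In `R = ℂ[[x,y]]` with `J = (y^k, x^ℓ y^m)`, `k > m ≥ 0`, `ℓ ≥ 1`: every
ideal of `R/J` of finite length is contained in the image of `(y^m)` in `R/J`,
and consequently the length of `J` along the associated prime `(x,y)`, i.e. the
length of the largest finite-length ideal `(y^m)(R/J)`, equals `ℓ(k-m)`. -/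
theorem stmt9 (k m l : ℕ) (hkm : m < k) (hl : 1 ≤ l)
    (x y : MvPowerSeries (Fin 2) ℂ)
    (hx : x = MvPowerSeries.X 0) (hy : y = MvPowerSeries.X 1)
    (J : Ideal (MvPowerSeries (Fin 2) ℂ))
    (hJ : J = Ideal.span {y ^ k, x ^ l * y ^ m})
    (I : Ideal (MvPowerSeries (Fin 2) ℂ ⧸ J))
    (hI : I = Ideal.map (Ideal.Quotient.mk J)
      (Ideal.span ({y ^ m} : Set (MvPowerSeries (Fin 2) ℂ)))) :
    (∀ a : Ideal (MvPowerSeries (Fin 2) ℂ ⧸ J),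
      IsFiniteLength (MvPowerSeries (Fin 2) ℂ ⧸ J) a → a ≤ I) ∧
    IsFiniteLength (MvPowerSeries (Fin 2) ℂ ⧸ J) I ∧
    moduleLength (MvPowerSeries (Fin 2) ℂ ⧸ J) I = (l * (k - m) : ℕ) := by
  classical
  subst hx hy
  set X0 : RR := MvPowerSeries.X 0 with hX0
  set X1 : RR := MvPowerSeries.X 1 with hX1
  set N : ℕ := l * (k - m) with hN
  set mk : RR →+* RR ⧸ J := Ideal.Quotient.mk J with hmk
  have hmk_surj : Function.Surjective mk := Ideal.Quotient.mk_surjective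
  -- J is contained in (y^m)
  have hJle : J ≤ Ideal.span {X1 ^ m} := by
    rw [hJ, Ideal.span_le]
    rintro u hu
    rcases hu with hu | hu
    · rw [hu]
      exact Ideal.mem_span_singleton.mpr (pow_dvd_pow _ hkm.le)
    · rw [Set.mem_singleton_iff] at hu
      rw [hu]
      exact Ideal.mem_span_singleton.mpr (dvd_mul_left _ _)
  -- membership in I
  have hImem : ∀ f : RR, mk f ∈ I ↔ X1 ^ m ∣ f := by
    intro f
    constructor
    · intro hf
      rw [hI] at hf
      obtain ⟨w, hw, hwf⟩ := (Ideal.mem_map_iff_of_surjective mk hmk_surj).mp hf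
      have hd : w - f ∈ J := Ideal.Quotient.eq.mp hwf
      have : f ∈ Ideal.span {X1 ^ m} := by
        have : f = w - (w - f) := by ring
        rw [this]
        exact Submodule.sub_mem _ hw (hJle hd)
      exact Ideal.mem_span_singleton.mp this
    · intro hf
      rw [hI]
      exact Ideal.mem_map_of_mem mk (Ideal.mem_span_singleton.mpr hf)
  ---------------------------------------------------------------------------
  -- PART 1
  ---------------------------------------------------------------------------
  have part1 : ∀ a : Ideal (RR ⧸ J), IsFiniteLength (RR ⧸ J) a → a ≤ I := by
    intro a ha
    by_contra hna
    obtain ⟨z, hza, hzI⟩ := SetLike.not_le_iff_exists.mp hna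
    obtain ⟨g, rfl⟩ := hmk_surj z
    have hgm : ¬ X1 ^ m ∣ g := fun h => hzI ((hImem g).mpr h)
    have key : ∀ r : ℕ, mk (X0 ^ r * g) ∉ Ideal.span {mk (X0 ^ (r + 1) * g)} := by
      intro r hmem
      obtain ⟨c, hc⟩ := Ideal.mem_span_singleton.mp hmem
      obtain ⟨h, rfl⟩ := hmk_surj c
      rw [← map_mul, Ideal.Quotient.eq] at hc
      have h2 : X0 ^ r * (g * (1 - X0 * h)) ∈ J := by
        have heq : X0 ^ r * (g * (1 - X0 * h)) = X0 ^ r * g - X0 ^ (r + 1) * g * h := by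
          ring
        rw [heq]
        exact hc
      have h4 : X1 ^ m ∣ g * (1 - X0 * h) :=
        y_dvd_of_x_mul (Ideal.mem_span_singleton.mp (hJle h2))
      have hu : IsUnit (1 - X0 * h) := by
        rw [MvPowerSeries.isUnit_iff_constantCoeff]
        simp [hX0]
      exact hgm (hu.dvd_mul_right.mp h4)
    have hEa : ∀ r : ℕ, Ideal.span {mk (X0 ^ r * g)} ≤ a := by
      intro r
      rw [Ideal.span_le, Set.singleton_subset_iff]
      rw [SetLike.mem_coe, map_mul]
      exact Ideal.mul_mem_left _ _ hza
    set D : ℕ → Submodule (RR ⧸ J) ↥a := fun r =>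
      Submodule.comap a.subtype (Ideal.span {mk (X0 ^ r * g)}) with hD
    have hDdesc : ∀ r : ℕ, D (r + 1) < D r := by
      intro r
      have hle : Ideal.span {mk (X0 ^ (r + 1) * g)} ≤ Ideal.span {mk (X0 ^ r * g)} := by
        rw [Ideal.span_le, Set.singleton_subset_iff, SetLike.mem_coe]
        refine Ideal.mem_span_singleton.mpr ⟨mk X0, ?_⟩
        rw [← map_mul]
        congr 1
        ring
      refine lt_of_le_of_ne (Submodule.comap_mono hle) ?_
      intro he
      have hmapeq := congrArg (Submodule.map a.subtype) he
      rw [Submodule.map_comap_subtype, Submodule.map_comap_subtype,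
        inf_eq_right.mpr (hEa (r + 1)), inf_eq_right.mpr (hEa r)] at hmapeq
      exact key r (hmapeq ▸ Ideal.mem_span_singleton_self _)
    have hart : IsArtinian (RR ⧸ J) ↥a := (isFiniteLength_iff_isNoetherian_isArtinian.mp ha).2
    exact RelEmbedding.not_wellFounded (RelEmbedding.natGT D hDdesc)
      ((isArtinian_iff _ _).mp hart)
  ---------------------------------------------------------------------------
  -- the finite-dimensional envelope V
  ---------------------------------------------------------------------------
  set GF : Finset (RR ⧸ J) := (Finset.range l ×ˢ Finset.range (k - m)).image
    (fun p : ℕ × ℕ => mk (mono p.1 (m + p.2))) with hGF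
  set V : Submodule ℂ (RR ⧸ J) := Submodule.span ℂ (GF : Set (RR ⧸ J)) with hV
  haveI hVfd : FiniteDimensional ℂ ↥V := FiniteDimensional.span_of_finite ℂ GF.finite_toSet
  have hVrank : Module.finrank ℂ ↥V ≤ N := by
    refine le_trans (finrank_span_finset_le_card GF) ?_
    have hcard : GF.card ≤ (Finset.range l ×ˢ Finset.range (k - m)).card := by
      rw [hGF]
      exact Finset.card_image_le
    rw [Finset.card_product, Finset.card_range, Finset.card_range] at hcard
    exact hcard
  have hIV : ∀ z ∈ I, z ∈ V := by
    intro z hz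
    obtain ⟨f, rfl⟩ := hmk_surj z
    obtain ⟨g, rfl⟩ := (hImem f).mp hz
    obtain ⟨g1, g2, g3, hsum, ⟨u, hu⟩, ⟨v, hv⟩, h3⟩ := split_lemma l (k - m) g
    have hk' : X1 ^ m * X1 ^ (k - m) = X1 ^ k := by
      rw [← pow_add]
      congr 1
      omega
    have hmkeq : mk (X1 ^ m * g) = mk (X1 ^ m * g3) := by
      rw [Ideal.Quotient.eq]
      have heq : X1 ^ m * g - X1 ^ m * g3
          = (X0 ^ l * X1 ^ m) * u + (X1 ^ m * X1 ^ (k - m)) * v := by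
        rw [hsum, hu, hv]; ring
      rw [heq, hk', hJ]
      refine Ideal.add_mem _ ?_ ?_
      · exact Ideal.mul_mem_right _ _ (Ideal.subset_span (by simp))
      · exact Ideal.mul_mem_right _ _ (Ideal.subset_span (by simp))
    rw [hmkeq]
    have hg3 := mem_span_mono (l := l) (c := k - m) h3
    set L : RR →ₗ[ℂ] (RR ⧸ J) :=
      ((Ideal.Quotient.mkₐ ℂ J).toLinearMap).comp (LinearMap.mulLeft ℂ (X1 ^ m)) with hL
    have hLmem : L g3 ∈ Submodule.map L (Submodule.span ℂ ((fun p : ℕ × ℕ => mono p.1 p.2) ''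
        ((Finset.range l ×ˢ Finset.range (k - m) : Finset (ℕ × ℕ)) : Set (ℕ × ℕ)))) :=
      Submodule.mem_map_of_mem hg3
    rw [Submodule.map_span] at hLmem
    have hsub : Submodule.span ℂ (L '' ((fun p : ℕ × ℕ => mono p.1 p.2) ''
        ((Finset.range l ×ˢ Finset.range (k - m) : Finset (ℕ × ℕ)) : Set (ℕ × ℕ)))) ≤ V := by
      rw [Submodule.span_le]
      rintro w ⟨uu, ⟨p, hp, rfl⟩, rfl⟩
      have : L (mono p.1 p.2) = mk (mono p.1 (m + p.2)) := by
        rw [hL]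
        simp only [LinearMap.comp_apply, LinearMap.mulLeft_apply, AlgHom.toLinearMap_apply,
          Ideal.Quotient.mkₐ_eq_mk]
        exact congrArg _ (y_mul_mono m p.1 p.2)
      rw [this]
      refine Submodule.subset_span ?_
      rw [hGF]
      exact Finset.mem_coe.mpr (Finset.mem_image.mpr ⟨p, Finset.mem_coe.mp hp, rfl⟩)
    have : L g3 = mk (X1 ^ m * g3) := by
      rw [hL]
      simp [Ideal.Quotient.mkₐ_eq_mk, hmk]
    exact this ▸ hsub hLmem
  ---------------------------------------------------------------------------
  -- the strictly monotone finrank function on submodules of I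
  ---------------------------------------------------------------------------
  set F : Submodule (RR ⧸ J) ↥I → Submodule ℂ ↥V := fun p =>
    Submodule.comap V.subtype
      (Submodule.restrictScalars ℂ (Submodule.map I.subtype p)) with hF
  have hFle : ∀ p : Submodule (RR ⧸ J) ↥I,
      Submodule.restrictScalars ℂ (Submodule.map I.subtype p) ≤ V := by
    intro p z hz
    rw [Submodule.restrictScalars_mem] at hz
    exact hIV z (Submodule.map_subtype_le I p hz)
  have hFlt : ∀ p q : Submodule (RR ⧸ J) ↥I, p < q → F p < F q := by
    intro p q hpq
    have hinj : Function.Injective I.subtype := Subtype.coe_injective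
    have hmaplt : Submodule.map I.subtype p < Submodule.map I.subtype q :=
      lt_of_le_of_ne (Submodule.map_mono hpq.le)
        (fun he => hpq.ne (Submodule.map_injective_of_injective hinj he))
    have hrslt : Submodule.restrictScalars ℂ (Submodule.map I.subtype p)
        < Submodule.restrictScalars ℂ (Submodule.map I.subtype q) := by
      refine lt_of_le_of_ne (fun z hz => ?_) ?_
      · rw [Submodule.restrictScalars_mem] at hz ⊢
        exact hmaplt.le hz
      · intro he
        exact hmaplt.ne (Submodule.restrictScalars_injective ℂ _ _ he)
    refine lt_of_le_of_ne (Submodule.comap_mono hrslt.le) ?_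
    intro he
    have hmapeq := congrArg (Submodule.map V.subtype) he
    rw [Submodule.map_comap_subtype, Submodule.map_comap_subtype,
      inf_eq_right.mpr (hFle p), inf_eq_right.mpr (hFle q)] at hmapeq
    exact hrslt.ne hmapeq
  have hfr : ∀ p q : Submodule (RR ⧸ J) ↥I, p < q →
      Module.finrank ℂ ↥(F p) < Module.finrank ℂ ↥(F q) := by
    intro p q hpq
    exact Submodule.finrank_lt_finrank_of_lt (hFlt p q hpq)
  have hfrle : ∀ p : Submodule (RR ⧸ J) ↥I, Module.finrank ℂ ↥(F p) ≤ Module.finrank ℂ ↥V :=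
    fun p => Submodule.finrank_le (F p)
  ---------------------------------------------------------------------------
  -- PART 2 : finite length of I
  ---------------------------------------------------------------------------
  have part2 : IsFiniteLength (RR ⧸ J) ↥I := by
    rw [isFiniteLength_iff_isNoetherian_isArtinian]
    constructor
    · rw [isNoetherian_iff]
      refine Subrelation.wf (r := InvImage (· < ·)
        (fun p : Submodule (RR ⧸ J) ↥I => Module.finrank ℂ ↥V - Module.finrank ℂ ↥(F p))) ?_
        (InvImage.wf _ (Nat.lt_wfRel.wf))
      intro p q hpq
      have h1 := hfr q p hpq
      have h2 := hfrle p
      exact Nat.sub_lt_sub_left (lt_of_lt_of_le h1 h2) h1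
    · rw [isArtinian_iff]
      refine Subrelation.wf (r := InvImage (· < ·)
        (fun p : Submodule (RR ⧸ J) ↥I => Module.finrank ℂ ↥(F p))) ?_
        (InvImage.wf _ (Nat.lt_wfRel.wf))
      intro p q hpq
      exact hfr p q hpq
  ---------------------------------------------------------------------------
  -- the chain of monomial ideals
  ---------------------------------------------------------------------------
  set B : ℕ → Ideal RR := fun t => Ideal.span
    ({X1 ^ k, X0 ^ l * X1 ^ m} ∪
      {u : RR | ∃ a b : ℕ, a < l ∧ m ≤ b ∧ b < k ∧
        (l - 1 - a) * (k - m) + (k - 1 - b) < t ∧ u = mono a b}) with hB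
  have hJB : ∀ t, J ≤ B t := by
    intro t
    rw [hJ, hB]
    exact Ideal.span_mono Set.subset_union_left
  have hBy : ∀ t, B t ≤ Ideal.span {X1 ^ m} := by
    intro t
    rw [hB, Ideal.span_le]
    rintro u (hu | hu)
    · rcases hu with hu | hu
      · rw [hu]
        exact Ideal.mem_span_singleton.mpr (pow_dvd_pow _ hkm.le)
      · rw [Set.mem_singleton_iff] at hu
        rw [hu]
        exact Ideal.mem_span_singleton.mpr (dvd_mul_left _ _)
    · obtain ⟨a, b, _, hmb, _, _, rfl⟩ := hu
      refine Ideal.mem_span_singleton.mpr ⟨mono a (b - m), ?_⟩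
      rw [y_mul_mono]
      have hbb : m + (b - m) = b := by omega
      rw [hbb]
  have hnot : ∀ t (i j : ℕ), i < l → m ≤ j → j < k →
      t ≤ (l - 1 - i) * (k - m) + (k - 1 - j) → mono i j ∉ B t := by
    intro t i j hil hmj hjk ht hmem
    have h0 : MvPowerSeries.coeff (ee i j) (mono i j) = 0 := by
      rw [hB] at hmem
      refine coeff_span_monomials ?_ hmem
      rintro u (hu | hu) r
      · rcases hu with hu | hu
        · rw [hu, mono_zero]
          refine coeff_mul_mono ?_ r
          rw [ee_apply0, ee_apply1]
          omega
        · rw [Set.mem_singleton_iff] at hu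
          rw [hu, mono_eq]
          refine coeff_mul_mono ?_ r
          rw [ee_apply0, ee_apply1]
          omega
      · obtain ⟨a, b, hal, hmb, hbk, hrk, rfl⟩ := hu
        refine coeff_mul_mono ?_ r
        rw [ee_apply0, ee_apply1]
        rintro ⟨hai, hbj⟩
        have hmul : (l - 1 - i) * (k - m) ≤ (l - 1 - a) * (k - m) :=
          Nat.mul_le_mul_right _ (by omega)
        omega
    rw [mono, MvPowerSeries.coeff_monomial_same] at h0
    exact one_ne_zero h0
  set A : ℕ → Ideal (RR ⧸ J) := fun t => Ideal.map mk (B t) with hA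
  have hBmemA : ∀ t (f : RR), mk f ∈ A t ↔ f ∈ B t := by
    intro t f
    constructor
    · intro hf
      obtain ⟨w, hw, hwf⟩ := (Ideal.mem_map_iff_of_surjective mk hmk_surj).mp hf
      have hd : w - f ∈ J := Ideal.Quotient.eq.mp hwf
      have : f = w - (w - f) := by ring
      rw [this]
      exact Submodule.sub_mem _ hw (hJB t hd)
    · exact fun hf => Ideal.mem_map_of_mem mk hf
  have hAle : ∀ t, A t ≤ I := by
    intro t
    rw [hA, hI]
    exact Ideal.map_mono (hBy t)
  have hAmono : ∀ t, A t ≤ A (t + 1) := by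
    intro t
    refine Ideal.map_mono (Ideal.span_mono ?_)
    rintro u (hu | hu)
    · exact Or.inl hu
    · obtain ⟨a, b, h1, h2, h3, h4, rfl⟩ := hu
      exact Or.inr ⟨a, b, h1, h2, h3, by omega, rfl⟩
  have hAstrict : ∀ t, t < N → A t < A (t + 1) := by
    intro t htN
    have hkm0 : 0 < k - m := by omega
    obtain ⟨q, rr, hqr, hrlt, hql⟩ : ∃ q rr : ℕ, (k - m) * q + rr = t ∧ rr < k - m ∧ q < l := by
      refine ⟨t / (k - m), t % (k - m), Nat.div_add_mod t (k - m), Nat.mod_lt _ hkm0, ?_⟩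
      rw [Nat.div_lt_iff_lt_mul hkm0]
      rw [hN] at htN
      exact htN
    obtain ⟨i, j, hi, hj⟩ : ∃ i j : ℕ, i = l - 1 - q ∧ j = k - 1 - rr := ⟨_, _, rfl, rfl⟩
    have hil : i < l := by omega
    have hmj : m ≤ j := by omega
    have hjk : j < k := by omega
    have hrank : (l - 1 - i) * (k - m) + (k - 1 - j) = t := by
      have h1 : l - 1 - i = q := by omega
      have h2 : k - 1 - j = rr := by omega
      rw [h1, h2, mul_comm]
      omega
    refine lt_of_le_of_ne (hAmono t) ?_
    intro he
    have hmemB1 : mono i j ∈ B (t + 1) := by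
      rw [hB]
      exact Ideal.subset_span (Or.inr ⟨i, j, hil, hmj, hjk, by omega, rfl⟩)
    have hmemA : mk (mono i j) ∈ A (t + 1) := Ideal.mem_map_of_mem mk hmemB1
    rw [← he] at hmemA
    exact hnot t i j hil hmj hjk (by omega) ((hBmemA t _).mp hmemA)
  have hAN : A N = I := by
    refine le_antisymm (hAle N) ?_
    rw [hI, hA]
    refine Ideal.map_mono ?_
    rw [Ideal.span_le]
    rintro u hu
    rw [Set.mem_singleton_iff] at hu
    rw [hu, mono_zero]
    have hmul : (l - 1) * (k - m) + (k - m) = l * (k - m) := by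
      obtain ⟨l', rfl⟩ : ∃ l', l = l' + 1 := ⟨l - 1, by omega⟩
      rw [Nat.add_sub_cancel, add_one_mul]
    refine Ideal.subset_span (Or.inr ⟨0, m, by omega, le_refl m, by omega, by
      rw [hN]; simp only [Nat.sub_zero]; omega, rfl⟩)
  set C : ℕ → Submodule (RR ⧸ J) ↥I := fun t => Submodule.comap I.subtype (A t) with hC
  have hCstrict : ∀ t, t < N → C t < C (t + 1) := by
    intro t ht
    refine lt_of_le_of_ne (Submodule.comap_mono (hAmono t)) ?_
    intro he
    have hmapeq := congrArg (Submodule.map I.subtype) he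
    rw [Submodule.map_comap_subtype, Submodule.map_comap_subtype,
      inf_eq_right.mpr (hAle t), inf_eq_right.mpr (hAle (t + 1))] at hmapeq
    exact (hAstrict t ht).ne hmapeq
  have part3 : moduleLength (RR ⧸ J) ↥I = ((l * (k - m) : ℕ) : WithBot ℕ∞) := by
    unfold moduleLength
    refine le_antisymm ?_ ?_
    · unfold Order.krullDim
      refine iSup_le ?_
      intro p
      have hlen : p.length ≤ N := by
        have hstep : ∀ i : Fin p.length,
            (fun i => Module.finrank ℂ ↥(F (p.toFun i))) i.castSucc
              < (fun i => Module.finrank ℂ ↥(F (p.toFun i))) i.succ :=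
          fun i => hfr _ _ (p.step i)
        have hle := fin_id_le_of_strict (fun i => Module.finrank ℂ ↥(F (p.toFun i))) hstep
          (Fin.last p.length)
        have hb := hfrle (p.toFun (Fin.last p.length))
        rw [Fin.val_last] at hle
        omega
      have : (N : WithBot ℕ∞) = ((l * (k - m) : ℕ) : WithBot ℕ∞) := by rw [hN]
      rw [← this]
      exact_mod_cast hlen
    · have hstep : ∀ i : Fin N, C i.castSucc < C i.succ := by
        intro i
        have := hCstrict i i.isLt
        simpa using this
      have hkd := Order.LTSeries.length_le_krullDim (α := Submodule (RR ⧸ J) ↥I)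
        ⟨N, fun t => C t, hstep⟩
      have : ((l * (k - m) : ℕ) : WithBot ℕ∞) = (N : WithBot ℕ∞) := by rw [hN]
      rw [this]
      exact hkd
  exact ⟨part1, part2, part3⟩
end

section
/- Let (E,φ) and (F,ψ) be complexes of finite free modules over a commutative ring, differentials of odd degree, and b : (E,φ) → (F,ψ) a (degree-preserving, even) morphism of complexes, i.e., ψ_k b_k = b_{k-1} φ_k. Let D be a derivation on endomorphism-valued forms satisfying the graded Leibniz rule and compatible with composition. Then D(ψ_1) ⋯ D(ψ_p) b_p = b_0 D(φ_1) ⋯ D(φ_p) + ψ_1 α + β φ_p for some Hom(E_p, F_1)-valued form α and some Hom(E_{p-1}, F_0)-valued form β. -/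
/-- Algebraic version of Lemma 4.3: if `b` is an (even) morphism of complexes
between the complexes `(F,ψ)` and `(E,φ)` (with `φ_k, ψ_k` odd) and `D` is an
additive operator satisfying the graded Leibniz rules, then
`D(ψ₁) ⋯ D(ψ_p) b_p = b₀ D(φ₁) ⋯ D(φ_p) + ψ₁ α + β φ_p` for some `α`, `β`. -/
theorem stmt16 (A : Type*) [Ring A] (D : A → A) (p : ℕ) (hp : 1 ≤ p)
    (φ ψ b : ℕ → A)
    (hadd : ∀ u v, D (u + v) = D u + D v)
    (hchain : ∀ k, ψ (k + 1) * b (k + 1) = b k * φ (k + 1))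
    (hφcx : ∀ k, φ (k + 1) * φ (k + 2) = 0)
    (hψcx : ∀ k, ψ (k + 1) * ψ (k + 2) = 0)
    (hleibφ : ∀ k, D (φ (k + 1) * φ (k + 2)) =
      D (φ (k + 1)) * φ (k + 2) - φ (k + 1) * D (φ (k + 2)))
    (hleibψ : ∀ k, D (ψ (k + 1) * ψ (k + 2)) =
      D (ψ (k + 1)) * ψ (k + 2) - ψ (k + 1) * D (ψ (k + 2)))
    (hleibψb : ∀ k, D (ψ (k + 1) * b (k + 1)) =
      D (ψ (k + 1)) * b (k + 1) - ψ (k + 1) * D (b (k + 1)))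
    (hleibbφ : ∀ k, D (b k * φ (k + 1)) =
      D (b k) * φ (k + 1) + b k * D (φ (k + 1))) :
    ∃ α β : A,
      ((List.range p).map (fun k => D (ψ (k + 1)))).prod * b p =
        b 0 * ((List.range p).map (fun k => D (φ (k + 1)))).prod
          + ψ 1 * α + β * φ p := by
  have hD0 : D 0 = 0 := by
    have h : D 0 = D 0 + D 0 := by simpa using hadd 0 0
    exact (left_eq_add.mp h)
  have swapψ : ∀ k, D (ψ (k+1)) * ψ (k+2) = ψ (k+1) * D (ψ (k+2)) := by
    intro k
    have h := hleibψ k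
    rw [hψcx k, hD0] at h
    exact sub_eq_zero.mp h.symm
  have swapφ : ∀ k, D (φ (k+1)) * φ (k+2) = φ (k+1) * D (φ (k+2)) := by
    intro k
    have h := hleibφ k
    rw [hφcx k, hD0] at h
    exact sub_eq_zero.mp h.symm
  have key : ∀ k, D (ψ (k+1)) * b (k+1)
      = b k * D (φ (k+1)) + ψ (k+1) * D (b (k+1)) + D (b k) * φ (k+1) := by
    intro k
    have h1 := hleibψb k
    have h2 := hleibbφ k
    rw [hchain k] at h1
    rw [h1] at h2
    have h3 := sub_eq_iff_eq_add.mp h2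
    rw [h3]; abel
  set Pψ : ℕ → A := fun n => ((List.range' 1 n).map (fun j => D (ψ j))).prod with hPψ
  set Pψ' : ℕ → A := fun n => ((List.range' 2 n).map (fun j => D (ψ j))).prod with hPψ'
  set Pφ : ℕ → A := fun j => ((List.range' (j+1) (p-j)).map (fun i => D (φ i))).prod with hPφ
  have Pψ_succ : ∀ k, Pψ (k+1) = Pψ k * D (ψ (k+1)) := by
    intro k
    have e : (1:ℕ) + 1 * k = k + 1 := by omega
    simp only [hPψ, List.range'_concat, e, List.map_append, List.prod_append,
      List.map_cons, List.map_nil, List.prod_cons, List.prod_nil, mul_one]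
  have Pψ'_succ : ∀ k, Pψ' (k+1) = Pψ' k * D (ψ (k+2)) := by
    intro k
    have e : (2:ℕ) + 1 * k = k + 2 := by omega
    simp only [hPψ', List.range'_concat, e, List.map_append, List.prod_append,
      List.map_cons, List.map_nil, List.prod_cons, List.prod_nil, mul_one]
  have pushψ : ∀ k, Pψ k * ψ (k+1) = ψ 1 * Pψ' k := by
    intro k
    induction k with
    | zero => simp [hPψ, hPψ']
    | succ k ih =>
      calc Pψ (k+1) * ψ (k+2) = Pψ k * (D (ψ (k+1)) * ψ (k+2)) := by
            rw [Pψ_succ k, mul_assoc]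
        _ = Pψ k * ψ (k+1) * D (ψ (k+2)) := by rw [swapψ k, mul_assoc]
        _ = ψ 1 * Pψ' (k+1) := by rw [ih, Pψ'_succ k, mul_assoc]
  have pushφ : ∀ m k, φ (k+1) * ((List.range' (k+2) m).map (fun j => D (φ j))).prod
      = ((List.range' (k+1) m).map (fun j => D (φ j))).prod * φ (k+1+m) := by
    intro m
    induction m with
    | zero => intro k; simp
    | succ m ih =>
      intro k
      rw [List.range'_succ (s := k+2), List.range'_succ (s := k+1)]
      simp only [List.map_cons, List.prod_cons]
      have h3 : k + 2 + 1 = k + 1 + 2 := by omega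
      have h4 : k + 1 + 1 + m = k + 1 + (m + 1) := by omega
      have h5 : k + 1 + 1 = k + 2 := by omega
      rw [h3]
      calc φ (k+1) * (D (φ (k+2)) * ((List.range' (k+1+2) m).map (fun j => D (φ j))).prod)
          = (D (φ (k+1)) * φ (k+2)) * ((List.range' (k+1+2) m).map (fun j => D (φ j))).prod := by
            rw [← mul_assoc, swapφ k]
        _ = D (φ (k+1)) * (φ (k+1+1) * ((List.range' (k+1+2) m).map (fun j => D (φ j))).prod) := by
            rw [mul_assoc, h5]
        _ = D (φ (k+1)) * (((List.range' (k+1+1) m).map (fun j => D (φ j))).prod * φ (k+1+1+m)) := by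
            rw [ih (k+1)]
        _ = D (φ (k+1)) * (((List.range' (k+2) m).map (fun j => D (φ j))).prod * φ (k+1+(m+1))) := by
            rw [h4, h5]
        _ = D (φ (k+1)) * ((List.range' (k+2) m).map (fun j => D (φ j))).prod * φ (k+1+(m+1)) := by
            rw [mul_assoc]
  have main : ∀ d, d ≤ p → ∃ α β : A,
      Pψ p * b p = Pψ (p-d) * (b (p-d) * Pφ (p-d)) + ψ 1 * α + β * φ p := by
    intro d
    induction d with
    | zero =>
      intro _
      refine ⟨0, 0, ?_⟩
      have e : p - 0 = p := by omega
      have e2 : p - p = 0 := by omega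
      simp [e, hPφ, e2]
    | succ d ih =>
      intro hd
      obtain ⟨α, β, hab⟩ := ih (by omega)
      set j := p - (d+1) with hj
      have ej : p - d = j + 1 := by omega
      rw [ej] at hab
      -- Pφ j = D (φ (j+1)) * Pφ (j+1)
      have f2 : Pφ j = D (φ (j+1)) * Pφ (j+1) := by
        have e1 : p - j = (p - (j+1)) + 1 := by omega
        have e2 : j + 1 + 1 = j + 2 := by omega
        simp only [hPφ, e1, List.range'_succ, List.map_cons, List.prod_cons, e2]
      -- rewrite the middle term
      have step : Pψ (j+1) * (b (j+1) * Pφ (j+1))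
          = Pψ j * (b j * Pφ j)
            + ψ 1 * (Pψ' j * (D (b (j+1)) * Pφ (j+1)))
            + (Pψ j * D (b j) * ((List.range' (j+1) (p-(j+1))).map (fun i => D (φ i))).prod) * φ p := by
        have hpφ : φ (j+1) * Pφ (j+1)
            = ((List.range' (j+1) (p-(j+1))).map (fun i => D (φ i))).prod * φ p := by
          have := pushφ (p-(j+1)) j
          have e3 : j + 1 + (p - (j+1)) = p := by omega
          rw [e3] at this
          simpa [hPφ] using this
        calc Pψ (j+1) * (b (j+1) * Pφ (j+1))
            = Pψ j * (D (ψ (j+1)) * b (j+1)) * Pφ (j+1) := by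
              rw [Pψ_succ j]; noncomm_ring
          _ = Pψ j * (b j * D (φ (j+1)) + ψ (j+1) * D (b (j+1)) + D (b j) * φ (j+1)) * Pφ (j+1) := by
              rw [key j]
          _ = Pψ j * (b j * (D (φ (j+1)) * Pφ (j+1)))
              + (Pψ j * ψ (j+1)) * (D (b (j+1)) * Pφ (j+1))
              + Pψ j * D (b j) * (φ (j+1) * Pφ (j+1)) := by noncomm_ring
          _ = _ := by
              rw [← f2, pushψ j, hpφ]
              noncomm_ring
      refine ⟨α + Pψ' j * (D (b (j+1)) * Pφ (j+1)),
              β + Pψ j * D (b j) * ((List.range' (j+1) (p-(j+1))).map (fun i => D (φ i))).prod, ?_⟩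
      rw [hab, step]
      noncomm_ring
  obtain ⟨α, β, hab⟩ := main p (le_refl p)
  refine ⟨α, β, ?_⟩
  have e : p - p = 0 := by omega
  rw [e] at hab
  have convψ : ((List.range p).map (fun k => D (ψ (k + 1)))).prod = Pψ p := by
    simp only [hPψ, List.range'_eq_map_range, List.map_map]
    congr 1
    apply List.map_congr_left
    intro x _
    simp [Nat.add_comm]
  have convφ : ((List.range p).map (fun k => D (φ (k + 1)))).prod = Pφ 0 := by
    simp only [hPφ, Nat.sub_zero, Nat.zero_add, List.range'_eq_map_range, List.map_map]
    congr 1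
    apply List.map_congr_left
    intro x _
    simp [Nat.add_comm]
  rw [convψ, convφ, hab]
  simp [hPψ]
end
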